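/- arXiv:2510.25433 — 3 statements merged into one kernel-verified Lean document; each statement's English description precedes it below -/
import Mathlib

section
/- Let κ > 0 and y_0, a, b be real numbers with b > 0 and |a| < κ. Define x_c = κ·(1 - (a/κ)^2)^(3/2)/b and y_c = y_0 - a·(1 - (a/κ)^2)/b, and set r_c = sqrt((y_c - y_0)^2 + x_c^2). Then both stationarity conditions hold: a + κ·(y_c - y_0)/r_c = 0 and b - κ·x_c^2/r_c^3 = 0. -/
open Real

theorem airy_caustic_converse
    (κ y_0 a b : ℝ)
    (hκ : 0 < κ) (hb : 0 < b) (ha : |a| < κ)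
    (x_c y_c r_c : ℝ)
    (hx : x_c = κ * (1 - (a / κ)^2) ^ ((3 : ℝ) / 2) / b)
    (hy : y_c = y_0 - a * (1 - (a / κ)^2) / b)
    (hr : r_c = Real.sqrt ((y_c - y_0)^2 + x_c^2)) :
    a + κ * (y_c - y_0) / r_c = 0 ∧ b - κ * x_c^2 / r_c^3 = 0 := by
  obtain ⟨u, hu_def⟩ : ∃ u : ℝ, u = 1 - (a / κ)^2 := ⟨_, rfl⟩
  rw [← hu_def] at hx hy
  have hκ' : κ ≠ 0 := ne_of_gt hκ
  have hu : 0 < u := by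
    have h1 : (a / κ)^2 < 1 := by
      rw [sq_lt_one_iff_abs_lt_one, abs_div, abs_of_pos hκ, div_lt_one hκ]
      exact ha
    rw [hu_def]
    linarith
  have hx2 : x_c ^ 2 = κ ^ 2 * u ^ 3 / b ^ 2 := by
    have h32 : (u ^ ((3 : ℝ) / 2)) ^ 2 = u ^ 3 := by
      rw [← Real.rpow_natCast (u ^ ((3:ℝ)/2)) 2, ← Real.rpow_mul hu.le,
        show ((3:ℝ)/2 * (2:ℕ)) = ((3:ℕ):ℝ) by norm_num, Real.rpow_natCast]
    rw [hx, div_pow, mul_pow, h32]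
  have hrc : r_c = u * κ / b := by
    rw [hr, hy, hx2]
    have : (y_0 - a * u / b - y_0)^2 + κ ^ 2 * u ^ 3 / b ^ 2 = (u * κ / b)^2 := by
      have : a ^ 2 = κ ^ 2 * (1 - u) := by
        rw [hu_def]; field_simp; ring
      field_simp
      linear_combination u^2 * this
    rw [this, Real.sqrt_sq (by positivity)]
  have hb' : b ≠ 0 := ne_of_gt hb
  have hrc0 : r_c ≠ 0 := by rw [hrc]; positivity
  constructor
  · rw [hy, hrc]
    field_simp
    ring
  · rw [hx2, hrc]
    field_simp
    ring
end

section
/- Let κ > 0, r ≠ 0, c ≠ 0, and θ, y_0 be real numbers. Define φ'(y_0) = κ·(-sin θ + (cos θ)^2·y_0/r - (2πc)^3·y_0^2/κ) and φ''(y_0) = κ·((cos θ)^2/r - 2·(2πc)^3·y_0/κ), and assume φ''(y_0) ≠ 0. Set x_c = κ/φ''(y_0) and y_c = y_0 - φ'(y_0)/φ''(y_0). Then y_c = x_c·sin θ - κ·x_c·(cos θ)^4/(32·π^3·c^3·r^2) - κ/(32·π^3·c^3·x_c) + κ·(cos θ)^2/(16·π^3·c^3·r). -/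
open Real

theorem airy_paraxial_trajectory
    (κ r c θ y_0 : ℝ) (hκ : 0 < κ) (hr : r ≠ 0) (hc : c ≠ 0)
    (dφ ddφ : ℝ)
    (hd : dφ = κ * (-Real.sin θ + (Real.cos θ)^2 * y_0 / r - (2 * π * c)^3 * y_0^2 / κ))
    (hdd : ddφ = κ * ((Real.cos θ)^2 / r - 2 * (2 * π * c)^3 * y_0 / κ))
    (hdd0 : ddφ ≠ 0)
    (x_c y_c : ℝ)
    (hx : x_c = κ / ddφ)
    (hy : y_c = y_0 - dφ / ddφ) :
    y_c = x_c * Real.sin θ - κ * x_c * (Real.cos θ)^4 / (32 * π^3 * c^3 * r^2)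
      - κ / (32 * π^3 * c^3 * x_c) + κ * (Real.cos θ)^2 / (16 * π^3 * c^3 * r) := by
  have hκ0 : κ ≠ 0 := ne_of_gt hκ
  have hx0 : x_c ≠ 0 := by rw [hx]; exact div_ne_zero hκ0 hdd0
  have hπ : π ≠ 0 := Real.pi_ne_zero
  have hD : κ^2 * (Real.cos θ)^2 - 16 * y_0 * κ * r * π^3 * c^3 ≠ 0 := by
    have : κ^2 * (Real.cos θ)^2 - 16 * y_0 * κ * r * π^3 * c^3 = κ * r * ddφ := by
      rw [hdd]; field_simp; ring
    rw [this]
    exact mul_ne_zero (mul_ne_zero hκ0 hr) hdd0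
  subst hy hx
  have h1 : κ / (32 * π ^ 3 * c ^ 3 * (κ / ddφ)) = ddφ / (32 * π ^ 3 * c ^ 3) := by
    rw [div_eq_div_iff (by positivity : (32:ℝ) * π ^ 3 * c ^ 3 * (κ / ddφ) ≠ 0) (by positivity : (32:ℝ) * π ^ 3 * c ^ 3 ≠ 0)]
    field_simp
  rw [h1]
  field_simp
  rw [hd, hdd]
  field_simp
  ring
end

section
/- Let κ > 0, r > 0, c ≠ 0, L > 0, and θ be real numbers, and define f : ℝ → ℝ by f(x) = x·sin θ - κ·x·(cos θ)^4/(32·π^3·c^3·r^2) - κ/(32·π^3·c^3·x) + κ·(cos θ)^2/(16·π^3·c^3·r). For x_c ≠ 0: (i) if κ·(cos θ)^2 + 8·π^3·c^3·r·L ≠ 0, then f(x_c) - x_c·f'(x_c) = -L/2 if and only if x_c = κ·r/(κ·(cos θ)^2 + 8·π^3·c^3·r·L); (ii) if κ·(cos θ)^2 - 8·π^3·c^3·r·L ≠ 0, then f(x_c) - x_c·f'(x_c) = L/2 if and only if x_c = κ·r/(κ·(cos θ)^2 - 8·π^3·c^3·r·L). -/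
open Real

theorem airy_max_distance_solutions
    (κ r c L θ : ℝ) (hκ : 0 < κ) (hr : 0 < r) (hc : c ≠ 0) (hL : 0 < L)
    (f : ℝ → ℝ)
    (hf : f = fun x => x * Real.sin θ - κ * x * (Real.cos θ)^4 / (32 * π^3 * c^3 * r^2)
      - κ / (32 * π^3 * c^3 * x) + κ * (Real.cos θ)^2 / (16 * π^3 * c^3 * r)) :
    ∀ x_c : ℝ, x_c ≠ 0 →
      ((κ * (Real.cos θ)^2 + 8 * π^3 * c^3 * r * L ≠ 0 →
        (f x_c - x_c * deriv f x_c = -L / 2 ↔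
          x_c = κ * r / (κ * (Real.cos θ)^2 + 8 * π^3 * c^3 * r * L))) ∧
       (κ * (Real.cos θ)^2 - 8 * π^3 * c^3 * r * L ≠ 0 →
        (f x_c - x_c * deriv f x_c = L / 2 ↔
          x_c = κ * r / (κ * (Real.cos θ)^2 - 8 * π^3 * c^3 * r * L)))) := by
  intro x hx
  have hπ : (π : ℝ) ≠ 0 := Real.pi_ne_zero
  have hr' : r ≠ 0 := ne_of_gt hr
  have hP : (16 * π^3 * c^3 : ℝ) ≠ 0 := by positivity
  have hfe : f = fun x => x * Real.sin θ - x * (κ * (Real.cos θ)^4 / (32 * π^3 * c^3 * r^2))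
      - (κ / (32 * π^3 * c^3)) * x⁻¹ + κ * (Real.cos θ)^2 / (16 * π^3 * c^3 * r) := by
    rw [hf]; funext y; ring
  have hd : HasDerivAt f (1 * Real.sin θ - 1 * (κ * (Real.cos θ)^4 / (32 * π^3 * c^3 * r^2))
      - (κ / (32 * π^3 * c^3)) * (-(x^2)⁻¹)) x := by
    rw [hfe]
    exact ((((hasDerivAt_id x).mul_const _).sub
      ((hasDerivAt_id x).mul_const _)).sub
      ((hasDerivAt_inv hx).const_mul _)).add_const _
  have hg : f x - x * deriv f x
      = κ * (Real.cos θ)^2 / (16 * π^3 * c^3 * r) - κ / (16 * π^3 * c^3 * x) := by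
    rw [hd.deriv, hf]
    field_simp
    ring
  rw [hg]
  have h16r : (16 * π^3 * c^3 * r : ℝ) ≠ 0 := mul_ne_zero hP hr'
  have h16x : (16 * π^3 * c^3 * x : ℝ) ≠ 0 := mul_ne_zero hP hx
  constructor
  · intro hK
    rw [eq_div_iff hK, div_sub_div _ _ h16r h16x, div_eq_iff (mul_ne_zero h16r h16x)]
    constructor
    · intro h
      refine mul_left_cancel₀ hP ?_
      linear_combination h
    · intro h; linear_combination (16 * π^3 * c^3) * h
  · intro hK
    rw [eq_div_iff hK, div_sub_div _ _ h16r h16x, div_eq_iff (mul_ne_zero h16r h16x)]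
    constructor
    · intro h
      refine mul_left_cancel₀ hP ?_
      linear_combination h
    · intro h; linear_combination (16 * π^3 * c^3) * h
end
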